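/- Let (Ω₁, 𝒜₁) and (Ω₂, 𝒜₂) be measurable spaces, ε₁ ≥ 0 and ε₂ ≥ 0, and let μ₁, μ₁' be finite measures on Ω₁ and μ₂, μ₂' be finite (σ-finite) measures on Ω₂ such that μ₁ S ≤ exp(ε₁)·μ₁' S for all measurable S ⊆ Ω₁ and μ₂ S ≤ exp(ε₂)·μ₂' S for all measurable S ⊆ Ω₂. Then the product measures satisfy (μ₁ ×ₘ μ₂) S ≤ exp(ε₁ + ε₂) · (μ₁' ×ₘ μ₂') S for every measurable set S ⊆ Ω₁ × Ω₂. -/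

import Mathlib

open MeasureTheory

theorem dp_sequential_composition
    {Ω₁ Ω₂ : Type*} [MeasurableSpace Ω₁] [MeasurableSpace Ω₂]
    (ε₁ ε₂ : ℝ) (hε₁ : 0 ≤ ε₁) (hε₂ : 0 ≤ ε₂)
    (μ₁ μ₁' : Measure Ω₁) [IsFiniteMeasure μ₁] [IsFiniteMeasure μ₁']
    (μ₂ μ₂' : Measure Ω₂) [IsFiniteMeasure μ₂] [IsFiniteMeasure μ₂']
    (h₁ : ∀ S : Set Ω₁, MeasurableSet S → μ₁ S ≤ ENNReal.ofReal (Real.exp ε₁) * μ₁' S)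
    (h₂ : ∀ S : Set Ω₂, MeasurableSet S → μ₂ S ≤ ENNReal.ofReal (Real.exp ε₂) * μ₂' S) :
    ∀ S : Set (Ω₁ × Ω₂), MeasurableSet S →
      (μ₁.prod μ₂) S ≤ ENNReal.ofReal (Real.exp (ε₁ + ε₂)) * (μ₁'.prod μ₂') S := by
  intro S hS
  set c₁ := ENNReal.ofReal (Real.exp ε₁)
  set c₂ := ENNReal.ofReal (Real.exp ε₂)
  have hle₁ : μ₁ ≤ c₁ • μ₁' := by
    rw [Measure.le_iff]
    intro s hs; simpa using h₁ s hs
  calc (μ₁.prod μ₂) S = ∫⁻ x, μ₂ (Prod.mk x ⁻¹' S) ∂μ₁ := Measure.prod_apply hS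
    _ ≤ ∫⁻ x, c₂ * μ₂' (Prod.mk x ⁻¹' S) ∂μ₁ :=
        lintegral_mono fun x => h₂ _ (measurable_prodMk_left hS)
    _ ≤ ∫⁻ x, c₂ * μ₂' (Prod.mk x ⁻¹' S) ∂(c₁ • μ₁') := lintegral_mono' hle₁ le_rfl
    _ = c₁ * (c₂ * ∫⁻ x, μ₂' (Prod.mk x ⁻¹' S) ∂μ₁') := by
        rw [lintegral_smul_measure, lintegral_const_mul _ (measurable_measure_prodMk_left hS), smul_eq_mul]
    _ = ENNReal.ofReal (Real.exp (ε₁ + ε₂)) * (μ₁'.prod μ₂') S := by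
        rw [← Measure.prod_apply hS, ← mul_assoc, Real.exp_add,
          ENNReal.ofReal_mul (Real.exp_nonneg _)]
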